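/- Suppose I = J ∪ H with J, H disjoint and nonempty, and suppose A_{j,h} = A_{h,h} and A_{j,j} = A_{h,j} for all j ∈ J, h ∈ H. If P_J = ∑_{i∈J} α_i x_i is a J-DP and P_H = ∑_{i∈H} α_i x_i is an H-DP for the LV system dx_i/dt = x_i(b_i + ∑_j A_{i,j}x_j), and the common cofactor values agree (i.e. b_i = b for all i ∈ I), then for every pair h ∈ {1,…,m}, j ∈ {1,…,m} of indices of I, condition (C3) holds: α_h(A_{i_h,i_j}−A_{i_j,i_j}) = α_j(A_{i_h,i_h}−A_{i_j,i_h}); in particular P_J + P_H satisfies the coefficient conditions for an I-DP. -/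

import Mathlib

open MvPolynomial

/-- The Lie derivative of a polynomial `P` along the polynomial vector field `f`. -/
noncomputable def lieDeriv {n : ℕ} (f : Fin n → MvPolynomial (Fin n) ℝ)
    (P : MvPolynomial (Fin n) ℝ) : MvPolynomial (Fin n) ℝ :=
  ∑ i, f i * pderiv i P

/-- `P` is a Darboux polynomial for the vector field `f`. -/
def IsDarboux {n : ℕ} (f : Fin n → MvPolynomial (Fin n) ℝ)
    (P : MvPolynomial (Fin n) ℝ) : Prop :=
  ∃ Ccof : MvPolynomial (Fin n) ℝ, lieDeriv f P = Ccof * P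

/-- The Lotka-Volterra vector field `dx_i/dt = x_i (b_i + ∑_j A_{i,j} x_j)`. -/
noncomputable def LV {n : ℕ} (A : Matrix (Fin n) (Fin n) ℝ) (b : Fin n → ℝ) :
    Fin n → MvPolynomial (Fin n) ℝ :=
  fun i => X i * (C (b i) + ∑ j, C (A i j) * X j)

lemma coeff_XX {n : ℕ} (m : Fin n →₀ ℕ) (i j : Fin n) :
    coeff m (X i * X j : MvPolynomial (Fin n) ℝ) =
      if Finsupp.single i 1 + Finsupp.single j 1 = m then 1 else 0 := by
  rw [X, X, monomial_mul, coeff_monomial, mul_one]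

lemma pderiv_lin {n : ℕ} (S : Finset (Fin n)) (α : Fin n → ℝ) (i : Fin n) :
    pderiv i (∑ k ∈ S, C (α k) * X k) = if i ∈ S then C (α i) else 0 := by
  rw [map_sum]
  simp only [pderiv_C_mul, pderiv_X, Pi.single_apply, mul_ite, mul_one, mul_zero]
  rw [Finset.sum_ite_eq' S i (fun k => C (α k))]

lemma coeff_lie {n : ℕ} (A : Matrix (Fin n) (Fin n) ℝ) (b : Fin n → ℝ)
    (S : Finset (Fin n)) (α : Fin n → ℝ) (m : Fin n →₀ ℕ) :
    coeff m (lieDeriv (LV A b) (∑ i ∈ S, C (α i) * X i)) =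
      ∑ i ∈ S, α i * (b i * (if Finsupp.single i 1 = m then 1 else 0)
        + ∑ j, A i j * (if Finsupp.single i 1 + Finsupp.single j 1 = m then 1 else 0)) := by
  rw [lieDeriv]
  have key : ∀ i : Fin n, LV A b i * pderiv i (∑ k ∈ S, C (α k) * X k) =
      if i ∈ S then C (α i) * (C (b i) * X i + ∑ j, C (A i j) * (X i * X j)) else 0 := by
    intro i
    rw [pderiv_lin]
    split_ifs with h
    · rw [LV, mul_add, Finset.mul_sum, add_mul, Finset.sum_mul, mul_add, Finset.mul_sum]
      congr 1
      · ring
      · exact Finset.sum_congr rfl fun j _ => by ring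
    · rw [mul_zero]
  simp only [key]
  rw [Finset.sum_ite_mem, Finset.univ_inter, coeff_sum]
  refine Finset.sum_congr rfl fun i _ => ?_
  rw [coeff_C_mul, coeff_add, coeff_C_mul, coeff_X', coeff_sum]
  simp only [coeff_C_mul, coeff_XX]

lemma coeff_QP {n : ℕ} (Q : MvPolynomial (Fin n) ℝ)
    (S : Finset (Fin n)) (α : Fin n → ℝ) (m : Fin n →₀ ℕ) :
    coeff m (Q * ∑ i ∈ S, C (α i) * X i) =
      ∑ i ∈ S, α i * (if i ∈ m.support then coeff (m - Finsupp.single i 1) Q else 0) := by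
  rw [Finset.mul_sum, coeff_sum]
  refine Finset.sum_congr rfl fun i _ => ?_
  rw [mul_left_comm, coeff_C_mul, coeff_mul_X']

lemma darboux_C3 {n : ℕ} (A : Matrix (Fin n) (Fin n) ℝ) (b : Fin n → ℝ)
    (S : Finset (Fin n)) (α : Fin n → ℝ) (hα : ∀ i ∈ S, α i ≠ 0)
    (hP : IsDarboux (LV A b) (∑ i ∈ S, C (α i) * X i)) :
    ∀ p ∈ S, ∀ q ∈ S, α p * (A p q - A q q) = α q * (A p p - A q p) := by
  obtain ⟨Q, hQ⟩ := hP
  have hone : (1 : ℕ) ≠ 0 := one_ne_zero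
  -- diagonal coefficients of Q
  have hdiag : ∀ r ∈ S, coeff (Finsupp.single r 1) Q = A r r := by
    intro r hr
    have h := congrArg (coeff (Finsupp.single r 1 + Finsupp.single r 1)) hQ
    rw [coeff_lie, coeff_QP] at h
    have hsub : (Finsupp.single r 1 + Finsupp.single r 1 : Fin n →₀ ℕ) - Finsupp.single r 1
        = Finsupp.single r 1 := add_tsub_cancel_right _ _
    have hsupp : ((Finsupp.single r 1 + Finsupp.single r 1 : Fin n →₀ ℕ)).support = {r} := by
      rw [← Finsupp.single_add]
      exact Finsupp.support_single_ne_zero r two_ne_zero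
    have hne1 : ∀ i : Fin n, (Finsupp.single i 1 : Fin n →₀ ℕ) ≠
        Finsupp.single r 1 + Finsupp.single r 1 := by
      intro i hcon
      have hv := DFunLike.congr_fun hcon r
      simp only [Finsupp.add_apply, Finsupp.single_apply, if_pos rfl] at hv
      split_ifs at hv <;> omega
    have hiff : ∀ i j : Fin n,
        ((Finsupp.single i 1 + Finsupp.single j 1 : Fin n →₀ ℕ)
          = Finsupp.single r 1 + Finsupp.single r 1) ↔ (i = r ∧ j = r) := by
      intro i j
      rw [Finsupp.single_add_single_eq_single_add_single hone hone]
      constructor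
      · rintro ((⟨ha, hb⟩) | (⟨_, ha, hb⟩) | (⟨hc, _⟩))
        · exact ⟨ha, hb⟩
        · exact ⟨ha, hb⟩
        · exact absurd hc (by norm_num)
      · rintro ⟨ha, hb⟩; exact Or.inl ⟨ha, hb⟩
    have hL : ∑ i ∈ S, α i * (b i * (if (Finsupp.single i 1 : Fin n →₀ ℕ)
          = Finsupp.single r 1 + Finsupp.single r 1 then 1 else 0)
        + ∑ j, A i j * (if (Finsupp.single i 1 + Finsupp.single j 1 : Fin n →₀ ℕ)
          = Finsupp.single r 1 + Finsupp.single r 1 then 1 else 0)) = α r * A r r := by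
      have hterm : ∀ i ∈ S, α i * (b i * (if (Finsupp.single i 1 : Fin n →₀ ℕ)
            = Finsupp.single r 1 + Finsupp.single r 1 then 1 else 0)
          + ∑ j, A i j * (if (Finsupp.single i 1 + Finsupp.single j 1 : Fin n →₀ ℕ)
            = Finsupp.single r 1 + Finsupp.single r 1 then 1 else 0))
          = if i = r then α r * A r r else 0 := by
        intro i _
        simp only [hne1, if_false, mul_zero, zero_add, hiff]
        by_cases hi : i = r
        · rw [hi]
          simp [Finset.sum_ite_eq' Finset.univ r (fun j => A r j)]
        · simp [hi]
      rw [Finset.sum_congr rfl hterm, Finset.sum_ite_eq' S r, if_pos hr]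
    have hR : ∑ i ∈ S, α i * (if i ∈ ((Finsupp.single r 1 + Finsupp.single r 1 :
          Fin n →₀ ℕ)).support then
          coeff ((Finsupp.single r 1 + Finsupp.single r 1) - Finsupp.single i 1) Q else 0)
        = α r * coeff (Finsupp.single r 1) Q := by
      have hterm : ∀ i ∈ S, α i * (if i ∈ ((Finsupp.single r 1 + Finsupp.single r 1 :
            Fin n →₀ ℕ)).support then
            coeff ((Finsupp.single r 1 + Finsupp.single r 1) - Finsupp.single i 1) Q else 0)
          = if i = r then α r * coeff (Finsupp.single r 1) Q else 0 := by
        intro i _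
        simp only [hsupp, Finset.mem_singleton]
        by_cases hi : i = r
        · rw [hi]; rw [if_pos rfl, if_pos rfl, hsub]
        · rw [if_neg hi, if_neg hi, mul_zero]
      rw [Finset.sum_congr rfl hterm, Finset.sum_ite_eq' S r, if_pos hr]
    rw [hL, hR] at h
    exact (mul_left_cancel₀ (hα r hr) h).symm
  -- main claim
  intro p hp q hq
  rcases eq_or_ne p q with rfl | hpq
  · ring
  have h := congrArg (coeff (Finsupp.single p 1 + Finsupp.single q 1)) hQ
  rw [coeff_lie, coeff_QP] at h
  have hsupp : ((Finsupp.single p 1 + Finsupp.single q 1 : Fin n →₀ ℕ)).support = {p, q} := by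
    rw [Finsupp.support_add_eq (by simp [Finsupp.support_single_ne_zero, hpq.symm, hpq]),
      Finsupp.support_single_ne_zero _ hone, Finsupp.support_single_ne_zero _ hone]
    ext x; simp
  have hsubp : (Finsupp.single p 1 + Finsupp.single q 1 : Fin n →₀ ℕ) - Finsupp.single p 1
      = Finsupp.single q 1 := by rw [add_comm]; exact add_tsub_cancel_right _ _
  have hsubq : (Finsupp.single p 1 + Finsupp.single q 1 : Fin n →₀ ℕ) - Finsupp.single q 1
      = Finsupp.single p 1 := add_tsub_cancel_right _ _
  have hne1 : ∀ i : Fin n, (Finsupp.single i 1 : Fin n →₀ ℕ) ≠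
      Finsupp.single p 1 + Finsupp.single q 1 := by
    intro i hcon
    have hvp := DFunLike.congr_fun hcon p
    have hvq := DFunLike.congr_fun hcon q
    simp only [Finsupp.add_apply, Finsupp.single_apply, if_pos rfl, if_neg hpq,
      if_neg hpq.symm] at hvp hvq
    split_ifs at hvp hvq <;> omega
  have hiff : ∀ i j : Fin n,
      ((Finsupp.single i 1 + Finsupp.single j 1 : Fin n →₀ ℕ)
        = Finsupp.single p 1 + Finsupp.single q 1) ↔ ((i = p ∧ j = q) ∨ (i = q ∧ j = p)) := by
    intro i j
    rw [Finsupp.single_add_single_eq_single_add_single hone hone]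
    constructor
    · rintro ((⟨ha, hb⟩) | (⟨_, ha, hb⟩) | (⟨hc, _⟩))
      · exact Or.inl ⟨ha, hb⟩
      · exact Or.inr ⟨ha, hb⟩
      · exact absurd hc (by norm_num)
    · rintro (⟨ha, hb⟩ | ⟨ha, hb⟩)
      · exact Or.inl ⟨ha, hb⟩
      · exact Or.inr (Or.inl ⟨rfl, ha, hb⟩)
  have hL : ∑ i ∈ S, α i * (b i * (if (Finsupp.single i 1 : Fin n →₀ ℕ)
        = Finsupp.single p 1 + Finsupp.single q 1 then 1 else 0)
      + ∑ j, A i j * (if (Finsupp.single i 1 + Finsupp.single j 1 : Fin n →₀ ℕ)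
        = Finsupp.single p 1 + Finsupp.single q 1 then 1 else 0))
      = α p * A p q + α q * A q p := by
    have hterm : ∀ i ∈ S, α i * (b i * (if (Finsupp.single i 1 : Fin n →₀ ℕ)
          = Finsupp.single p 1 + Finsupp.single q 1 then 1 else 0)
        + ∑ j, A i j * (if (Finsupp.single i 1 + Finsupp.single j 1 : Fin n →₀ ℕ)
          = Finsupp.single p 1 + Finsupp.single q 1 then 1 else 0))
        = (if i = p then α p * A p q else 0) + (if i = q then α q * A q p else 0) := by
      intro i _
      simp only [hne1, if_false, mul_zero, zero_add, hiff]
      by_cases hip : i = p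
      · rw [hip]
        rw [if_pos rfl, if_neg hpq, add_zero]
        have hj : ∀ j : Fin n,
            (A p j * if ((p = p ∧ j = q) ∨ (p = q ∧ j = p) : Prop) then (1:ℝ) else 0)
            = if j = q then A p j else 0 := by
          intro j
          by_cases hj : j = q
          · rw [if_pos (Or.inl ⟨rfl, hj⟩), if_pos hj, mul_one]
          · rw [if_neg, if_neg hj, mul_zero]
            rintro (⟨_, hc⟩ | ⟨hc, _⟩)
            · exact hj hc
            · exact hpq hc
        rw [Finset.sum_congr rfl (fun j _ => hj j),
          Finset.sum_ite_eq' Finset.univ q (fun j => A p j), if_pos (Finset.mem_univ q)]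
      · by_cases hiq : i = q
        · rw [hiq]
          rw [if_neg (fun hc => hpq (hc.symm)), if_pos rfl, zero_add]
          have hj : ∀ j : Fin n,
              (A q j * if ((q = p ∧ j = q) ∨ (q = q ∧ j = p) : Prop) then (1:ℝ) else 0)
              = if j = p then A q j else 0 := by
            intro j
            by_cases hj : j = p
            · rw [if_pos (Or.inr ⟨rfl, hj⟩), if_pos hj, mul_one]
            · rw [if_neg, if_neg hj, mul_zero]
              rintro (⟨hc, _⟩ | ⟨_, hc⟩)
              · exact hpq hc.symm
              · exact hj hc
          rw [Finset.sum_congr rfl (fun j _ => hj j),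
            Finset.sum_ite_eq' Finset.univ p (fun j => A q j), if_pos (Finset.mem_univ p)]
        · rw [if_neg hip, if_neg hiq, add_zero]
          have hj : ∀ j, (A i j * if ((i = p ∧ j = q) ∨ (i = q ∧ j = p) : Prop) then (1:ℝ) else 0)
              = 0 := by
            intro j
            rw [if_neg, mul_zero]
            rintro (⟨hc, _⟩ | ⟨hc, _⟩)
            · exact hip hc
            · exact hiq hc
          rw [Finset.sum_congr rfl (fun j _ => hj j), Finset.sum_const_zero, mul_zero]
    rw [Finset.sum_congr rfl hterm, Finset.sum_add_distrib,
      Finset.sum_ite_eq' S p, Finset.sum_ite_eq' S q, if_pos hp, if_pos hq]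
  have hR : ∑ i ∈ S, α i * (if i ∈ ((Finsupp.single p 1 + Finsupp.single q 1 :
        Fin n →₀ ℕ)).support then
        coeff ((Finsupp.single p 1 + Finsupp.single q 1) - Finsupp.single i 1) Q else 0)
      = α p * A q q + α q * A p p := by
    have hterm : ∀ i ∈ S, α i * (if i ∈ ((Finsupp.single p 1 + Finsupp.single q 1 :
          Fin n →₀ ℕ)).support then
          coeff ((Finsupp.single p 1 + Finsupp.single q 1) - Finsupp.single i 1) Q else 0)
        = (if i = p then α p * A q q else 0) + (if i = q then α q * A p p else 0) := by
      intro i _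
      simp only [hsupp, Finset.mem_insert, Finset.mem_singleton]
      by_cases hip : i = p
      · rw [hip]
        rw [if_pos (Or.inl rfl), hsubp, hdiag q hq, if_pos rfl, if_neg hpq, add_zero]
      · by_cases hiq : i = q
        · rw [hiq]
          rw [if_pos (Or.inr rfl), hsubq, hdiag p hp, if_neg (fun hc => hpq hc.symm), if_pos rfl, zero_add]
        · rw [if_neg (by tauto), if_neg hip, if_neg hiq, mul_zero, add_zero]
    rw [Finset.sum_congr rfl hterm, Finset.sum_add_distrib,
      Finset.sum_ite_eq' S p, Finset.sum_ite_eq' S q, if_pos hp, if_pos hq]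
  rw [hL, hR] at h
  linarith [h]

/-- Prop. 3 (special solution): if `I = J ∪ H` with `J, H` disjoint nonempty,
the coupling conditions `A_{j,h} = A_{h,h}`, `A_{j,j} = A_{h,j}` hold for
`j ∈ J`, `h ∈ H`, the `b_i` are constant on `I`, and `P_J`, `P_H` are
`J`- and `H`-DPs, then condition (C3) holds for all pairs of indices of `I`;
in particular `P_J + P_H` satisfies the coefficient conditions for an `I`-DP. -/
theorem special_solution {n : ℕ} (A : Matrix (Fin n) (Fin n) ℝ) (b : Fin n → ℝ)
    (J H : Finset (Fin n)) (hd : Disjoint J H) (hJ : J.Nonempty) (hH : H.Nonempty)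
    (hcouple : ∀ j ∈ J, ∀ h ∈ H, A j h = A h h ∧ A j j = A h j)
    (b0 : ℝ) (hb : ∀ i ∈ J ∪ H, b i = b0)
    (α : Fin n → ℝ) (hαJ : ∀ i ∈ J, α i ≠ 0) (hαH : ∀ i ∈ H, α i ≠ 0)
    (hPJ : IsDarboux (LV A b) (∑ i ∈ J, C (α i) * X i))
    (hPH : IsDarboux (LV A b) (∑ i ∈ H, C (α i) * X i)) :
    ∀ p ∈ J ∪ H, ∀ q ∈ J ∪ H,
      α p * (A p q - A q q) = α q * (A p p - A q p) := by
  intro p hpI q hqI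
  rcases Finset.mem_union.1 hpI with hp | hp <;> rcases Finset.mem_union.1 hqI with hq | hq
  · exact darboux_C3 A b J α hαJ hPJ p hp q hq
  · obtain ⟨h1, h2⟩ := hcouple p hp q hq
    rw [h1, h2]; ring
  · obtain ⟨h1, h2⟩ := hcouple q hq p hp
    rw [← h1, ← h2]; ring
  · exact darboux_C3 A b H α hαH hPH p hp q hq
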